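/- Let f : X → X be a homeomorphism of a compact metric space and C a chain component that is both initial and terminal and not clopen in X. Then for every a > 0 there exist a terminal chain component D ≠ C and an initial chain component E ≠ C with D ∪ E ⊆ B_a(C). -/
import Mathlib


open Metric Filter Topology Set

variable {X : Type*}

/-- `(c i)_{i=0}^k` is a `δ`-chain of `f` (up to index `k`). -/
def IsDeltaChain [MetricSpace X] (f : X → X) (δ : ℝ) (k : ℕ) (c : ℕ → X) : Prop :=
  ∀ i < k, dist (f (c i)) (c (i + 1)) ≤ δ

/-- `x → y` : for every `δ > 0` there is a `δ`-chain from `x` to `y`. -/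
def ChainReach [MetricSpace X] (f : X → X) (x y : X) : Prop :=
  ∀ δ > 0, ∃ k ≥ 1, ∃ c : ℕ → X, c 0 = x ∧ c k = y ∧ IsDeltaChain f δ k c

/-- The chain recurrent set. -/
def ChainRec [MetricSpace X] (f : X → X) : Set X := {x | ChainReach f x x}

/-- `C` is a chain component of `f`. -/
def IsChainComponent [MetricSpace X] (f : X → X) (C : Set X) : Prop :=
  ∃ x, ChainReach f x x ∧
    C = {y | ChainReach f y y ∧ ChainReach f x y ∧ ChainReach f y x}

/-- A set is chain stable iff points chain-reachable from it stay in it. -/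
def ChainStable [MetricSpace X] (f : X → X) (S : Set X) : Prop :=
  ∀ x ∈ S, ∀ y, ChainReach f x y → y ∈ S

/-- `S` is "initially stable": if `y → x` with `x ∈ S` then `y ∈ S`. -/
def InitialStable [MetricSpace X] (f : X → X) (S : Set X) : Prop :=
  ∀ x ∈ S, ∀ y, ChainReach f y x → y ∈ S

/-- `f` restricted to `Λ` is chain transitive. -/
def ChainTransitiveOn [MetricSpace X] (f : X → X) (Λ : Set X) : Prop :=
  ∀ p ∈ Λ, ∀ q ∈ Λ, ∀ δ > 0, ∃ k ≥ 1, ∃ c : ℕ → X,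
    c 0 = p ∧ c k = q ∧ (∀ i ≤ k, c i ∈ Λ) ∧ IsDeltaChain f δ k c

/-- `f` has shadowing on `S`. -/
def ShadowsOn [MetricSpace X] (f : X → X) (S : Set X) : Prop :=
  ∀ ε > 0, ∃ δ > 0, ∀ (k : ℕ) (c : ℕ → X), (∀ i ≤ k, c i ∈ S) →
    IsDeltaChain f δ k c → ∃ x, ∀ i ≤ k, dist (c i) (f^[i] x) ≤ ε

/-- Iterate of a homeomorphism indexed by `ℤ`. -/
def hIter [TopologicalSpace X] (f : X ≃ₜ X) (i : ℤ) : X → X :=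
  if 0 ≤ i then (⇑f)^[i.toNat] else (⇑f.symm)^[(-i).toNat]

/-- A `δ`-limit-pseudo orbit of the homeomorphism `f`. -/
def IsLimitPseudoOrbit [MetricSpace X] (f : X ≃ₜ X) (δ : ℝ) (ξ : ℤ → X) : Prop :=
  (∀ i : ℤ, dist (f (ξ i)) (ξ (i + 1)) ≤ δ) ∧
  Tendsto (fun i : ℤ => dist (f (ξ i)) (ξ (i + 1))) atBot (nhds 0) ∧
  Tendsto (fun i : ℤ => dist (f (ξ i)) (ξ (i + 1))) atTop (nhds 0)

/-- `f` has L-shadowing on `S`. -/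
def LShadowsOn [MetricSpace X] (f : X ≃ₜ X) (S : Set X) : Prop :=
  ∀ ε > 0, ∃ δ > 0, ∀ ξ : ℤ → X, (∀ i : ℤ, ξ i ∈ S) →
    IsLimitPseudoOrbit f δ ξ →
    ∃ x : X, (∀ i : ℤ, dist (ξ i) (hIter f i x) ≤ ε) ∧
      Tendsto (fun i : ℤ => dist (ξ i) (hIter f i x)) atBot (nhds 0) ∧
      Tendsto (fun i : ℤ => dist (ξ i) (hIter f i x)) atTop (nhds 0)

/-- `f` is expansive on `S`. -/
def ExpansiveOn [MetricSpace X] (f : X ≃ₜ X) (S : Set X) : Prop :=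
  ∃ e > 0, ∀ x y : X, (∀ i : ℤ, hIter f i x ∈ S) → (∀ i : ℤ, hIter f i y ∈ S) →
    (∀ i : ℤ, dist (hIter f i x) (hIter f i y) ≤ e) → x = y

/-- Closed `b`-neighborhood of `S`. -/
def Nbhd [MetricSpace X] (b : ℝ) (S : Set X) : Set X := {x | Metric.infDist x S ≤ b}

/-- Attractor for a continuous map `f`. -/
def IsAttractor [TopologicalSpace X] (f : X → X) (Λ : Set X) : Prop :=
  IsClosed Λ ∧ f '' Λ = Λ ∧
    ∃ U : Set X, IsOpen U ∧ f '' closure U ⊆ U ∧ Λ = ⋂ i : ℕ, f^[i] '' U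

/-- `f` is (topologically) mixing. -/
def IsMixing [TopologicalSpace X] (f : X → X) : Prop :=
  ∀ U V : Set X, IsOpen U → IsOpen V → U.Nonempty → V.Nonempty →
    ∃ j : ℕ, ∀ i ≥ j, (f^[i] '' U ∩ V).Nonempty

/-- The ω-limit set of `x` under `f`. -/
def OmegaSet [TopologicalSpace X] (f : X → X) (x : X) : Set X :=
  {y | ∃ φ : ℕ → ℕ, StrictMono φ ∧ Tendsto (fun j => f^[φ j] x) atTop (nhds y)}

/-- `M` is a minimal set for `f`. -/
def IsMinimalSet [TopologicalSpace X] (f : X → X) (M : Set X) : Prop :=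
  M.Nonempty ∧ IsClosed M ∧ f '' M ⊆ M ∧ ∀ x ∈ M, OmegaSet f x = M


section Stmt16Aux

variable [MetricSpace X] [CompactSpace X]

private lemma uc16 {g : X → X} (hg : Continuous g) {ε : ℝ} (hε : 0 < ε) :
    ∃ δ > 0, ∀ u v : X, dist u v ≤ δ → dist (g u) (g v) ≤ ε := by
  have h := CompactSpace.uniformContinuous_of_continuous hg
  rw [Metric.uniformContinuous_iff] at h
  obtain ⟨δ, hδ, hd⟩ := h ε hε
  exact ⟨δ / 2, by positivity, fun u v huv =>
    (hd (lt_of_le_of_lt huv (by linarith))).le⟩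

/-- Gluing two chains. -/
private def glue16 (k1 : ℕ) (c1 c2 : ℕ → X) : ℕ → X :=
  fun i => if i ≤ k1 then c1 i else c2 (i - k1)

private lemma glue16_zero (k1 : ℕ) (c1 c2 : ℕ → X) : glue16 k1 c1 c2 0 = c1 0 := by
  simp [glue16]

private lemma glue16_last (k1 : ℕ) {k2 : ℕ} (c1 c2 : ℕ → X) (hk2 : 1 ≤ k2) :
    glue16 k1 c1 c2 (k1 + k2) = c2 k2 := by
  simp only [glue16]
  rw [if_neg (by omega)]
  congr 1
  omega

private lemma glue16_chain {g : X → X} {δ ε : ℝ} {k1 k2 : ℕ} {c1 c2 : ℕ → X}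
    (h1 : IsDeltaChain g δ k1 c1) (h2 : IsDeltaChain g δ k2 c2) (hk2 : 1 ≤ k2)
    (hjoin : dist (g (c1 k1)) (c2 1) ≤ ε) (hδε : δ ≤ ε) :
    IsDeltaChain g ε (k1 + k2) (glue16 k1 c1 c2) := by
  intro i hi
  rcases lt_trichotomy i k1 with h | h | h
  · have e1 : glue16 k1 c1 c2 i = c1 i := by simp only [glue16]; rw [if_pos (by omega)]
    have e2 : glue16 k1 c1 c2 (i + 1) = c1 (i + 1) := by
      simp only [glue16]; rw [if_pos (by omega)]
    rw [e1, e2]; exact (h1 i h).trans hδε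
  · subst h
    have e1 : glue16 i c1 c2 i = c1 i := by simp only [glue16]; rw [if_pos le_rfl]
    have e2 : glue16 i c1 c2 (i + 1) = c2 1 := by
      simp only [glue16]; rw [if_neg (by omega)]; congr 1; omega
    rw [e1, e2]; exact hjoin
  · have e1 : glue16 k1 c1 c2 i = c2 (i - k1) := by
      simp only [glue16]; rw [if_neg (by omega)]
    have e2 : glue16 k1 c1 c2 (i + 1) = c2 (i - k1 + 1) := by
      simp only [glue16]; rw [if_neg (by omega)]; congr 1; omega
    rw [e1, e2]
    exact (h2 (i - k1) (by omega)).trans hδε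

private lemma reach16_trans {g : X → X} {x y z : X} (hxy : ChainReach g x y)
    (hyz : ChainReach g y z) : ChainReach g x z := by
  intro δ hδ
  obtain ⟨k1, hk1, c1, h10, h1k, h1⟩ := hxy δ hδ
  obtain ⟨k2, hk2, c2, h20, h2k, h2⟩ := hyz δ hδ
  refine ⟨k1 + k2, by omega, glue16 k1 c1 c2, by rw [glue16_zero]; exact h10,
    by rw [glue16_last _ _ _ hk2]; exact h2k, glue16_chain h1 h2 hk2 ?_ le_rfl⟩
  have hyy : c1 k1 = c2 0 := by rw [h1k, h20]
  rw [hyy]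
  exact h2 0 hk2

private lemma reach16_self_apply {g : X → X} (x : X) : ChainReach g x (g x) := by
  intro δ hδ
  refine ⟨1, le_rfl, fun i => if i = 0 then x else g x, rfl, rfl, fun i hi => ?_⟩
  have h0 : i = 0 := by omega
  subst h0
  simp [hδ.le]

private lemma reach16_of_approx {g : X → X} (hg : Continuous g) {x y : X}
    (h : ∀ δ > 0, ∃ x' y' : X, dist x x' ≤ δ ∧ dist y y' ≤ δ ∧
      ∃ k ≥ 1, ∃ c : ℕ → X, c 0 = x' ∧ c k = y' ∧ IsDeltaChain g δ k c) :
    ChainReach g x y := by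
  intro δ hδ
  obtain ⟨δ', hδ', huc⟩ := uc16 hg (ε := δ / 3) (by positivity)
  have hγ : 0 < min (δ / 3) δ' := lt_min (by positivity) hδ'
  have hγ3 : min (δ / 3) δ' ≤ δ / 3 := min_le_left _ _
  have hγ' : min (δ / 3) δ' ≤ δ' := min_le_right _ _
  obtain ⟨x', y', hx', hy', k, hk, c, hc0, hck, hc⟩ := h (min (δ / 3) δ') hγ
  have hfx : dist (g x) (g x') ≤ δ / 3 := huc _ _ (hx'.trans hγ')
  have hd : ∀ j, j ≠ 0 → j ≠ k → Function.update (Function.update c 0 x) k y j = c j := by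
    intro j h1 h2
    rw [Function.update_of_ne h2, Function.update_of_ne h1]
  have hd0 : Function.update (Function.update c 0 x) k y 0 = x := by
    rw [Function.update_of_ne (by omega : (0:ℕ) ≠ k), Function.update_self]
  have hdk : Function.update (Function.update c 0 x) k y k = y := Function.update_self _ _ _
  have hyy : dist y' y ≤ min (δ / 3) δ' := by rw [dist_comm]; exact hy'
  refine ⟨k, hk, Function.update (Function.update c 0 x) k y, hd0, hdk, ?_⟩
  intro i hi
  by_cases hi0 : i = 0
  · subst hi0
    rw [hd0]
    by_cases hk1 : k = 1
    · rw [show (0:ℕ) + 1 = k by omega, hdk]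
      have h0 := hc 0 (by omega)
      rw [hc0] at h0
      have hck1 : c 1 = y' := by rw [show (1:ℕ) = k by omega]; exact hck
      rw [hck1] at h0
      calc dist (g x) y ≤ dist (g x) (g x') + dist (g x') y' + dist y' y :=
            dist_triangle4 _ _ _ _
        _ ≤ δ / 3 + min (δ / 3) δ' + min (δ / 3) δ' := add_le_add (add_le_add hfx h0) hyy
        _ ≤ δ := by linarith
    · rw [show (0:ℕ) + 1 = 1 from rfl, hd 1 one_ne_zero (by omega)]
      have h0 := hc 0 (by omega)
      rw [hc0] at h0
      calc dist (g x) (c 1) ≤ dist (g x) (g x') + dist (g x') (c 1) := dist_triangle _ _ _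
        _ ≤ δ / 3 + min (δ / 3) δ' := add_le_add hfx h0
        _ ≤ δ := by linarith
  · rw [hd i hi0 (by omega)]
    by_cases hik : i + 1 = k
    · rw [hik, hdk]
      have h0 := hc i hi
      rw [hik, hck] at h0
      calc dist (g (c i)) y ≤ dist (g (c i)) y' + dist y' y := dist_triangle _ _ _
        _ ≤ min (δ / 3) δ' + min (δ / 3) δ' := add_le_add h0 hyy
        _ ≤ δ := by linarith
    · rw [hd (i + 1) (by omega) hik]
      exact (hc i hi).trans (by linarith)

private lemma closed16_reach_right {g : X → X} (hg : Continuous g) (x : X) :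
    IsClosed {y | ChainReach g x y} := by
  apply isClosed_of_closure_subset
  intro y hy
  apply reach16_of_approx hg
  intro δ hδ
  obtain ⟨y', hy', hdy⟩ := Metric.mem_closure_iff.mp hy δ hδ
  obtain ⟨k, hk, c, h0, hk', hc⟩ := hy' δ hδ
  exact ⟨x, y', by simp [hδ.le], hdy.le, k, hk, c, h0, hk', hc⟩

private lemma closed16_reach_left {g : X → X} (hg : Continuous g) (x : X) :
    IsClosed {y | ChainReach g y x} := by
  apply isClosed_of_closure_subset
  intro y hy
  apply reach16_of_approx hg
  intro δ hδ
  obtain ⟨y', hy', hdy⟩ := Metric.mem_closure_iff.mp hy δ hδ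
  obtain ⟨k, hk, c, h0, hk', hc⟩ := hy' δ hδ
  exact ⟨y', x, hdy.le, by simp [hδ.le], k, hk, c, h0, hk', hc⟩

private lemma closed16_reach_diag {g : X → X} (hg : Continuous g) :
    IsClosed {y : X | ChainReach g y y} := by
  apply isClosed_of_closure_subset
  intro y hy
  apply reach16_of_approx hg
  intro δ hδ
  obtain ⟨y', hy', hdy⟩ := Metric.mem_closure_iff.mp hy δ hδ
  obtain ⟨k, hk, c, h0, hk', hc⟩ := hy' δ hδ
  exact ⟨y', y', hdy.le, hdy.le, k, hk, c, h0, hk', hc⟩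

private lemma reach16_symm (f : X ≃ₜ X) {x y : X} (h : ChainReach ⇑f.symm x y) :
    ChainReach ⇑f y x := by
  intro δ hδ
  obtain ⟨δ', hδ', huc⟩ := uc16 f.continuous hδ
  obtain ⟨k, hk, c, hc0, hck, hc⟩ := h (min δ δ') (lt_min hδ hδ')
  refine ⟨k, hk, fun i => c (k - i), by show c (k - 0) = y; rw [Nat.sub_zero]; exact hck,
    by show c (k - k) = x; rw [Nat.sub_self]; exact hc0, ?_⟩
  intro i hi
  show dist (f (c (k - i))) (c (k - (i + 1))) ≤ δ
  have h1 := hc (k - i - 1) (by omega)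
  have e : k - i - 1 + 1 = k - i := by omega
  rw [e] at h1
  have h2 := huc _ _ (h1.trans (min_le_right _ _))
  rw [Homeomorph.apply_symm_apply] at h2
  have e2 : k - (i + 1) = k - i - 1 := by omega
  rw [e2, dist_comm]
  exact h2

private lemma reach16_symm' (f : X ≃ₜ X) {x y : X} (h : ChainReach ⇑f x y) :
    ChainReach ⇑f.symm y x := by
  apply reach16_symm f.symm
  rwa [Homeomorph.symm_symm]

private lemma comp16_symm (f : X ≃ₜ X) {C : Set X} (h : IsChainComponent ⇑f.symm C) :
    IsChainComponent ⇑f C := by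
  obtain ⟨x0, h0, he⟩ := h
  refine ⟨x0, reach16_symm f h0, ?_⟩
  rw [he]
  ext y
  simp only [Set.mem_setOf_eq]
  exact ⟨fun ⟨h1, h2, h3⟩ => ⟨reach16_symm f h1, reach16_symm f h3, reach16_symm f h2⟩,
    fun ⟨h1, h2, h3⟩ => ⟨reach16_symm' f h1, reach16_symm' f h3, reach16_symm' f h2⟩⟩

private lemma comp16_symm' (f : X ≃ₜ X) {C : Set X} (h : IsChainComponent ⇑f C) :
    IsChainComponent ⇑f.symm C := by
  apply comp16_symm f.symm
  rwa [Homeomorph.symm_symm]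

private lemma claimA16 (f : X ≃ₜ X) {C : Set X} (hC : IsChainComponent ⇑f C)
    (hter : ChainStable ⇑f C) {a : ℝ} (ha : 0 < a) :
    ∃ b > 0, ∀ x y : X, Metric.infDist x C ≤ b → ChainReach ⇑f x y →
      Metric.infDist y C ≤ a := by
  by_contra hcon
  push_neg at hcon
  obtain ⟨x0, hx00, hCe⟩ := hC
  have hx0C : x0 ∈ C := by rw [hCe]; exact ⟨hx00, hx00, hx00⟩
  have hmut : ∀ p ∈ C, ∀ q ∈ C, ChainReach ⇑f p q := by
    intro p hp q hq
    rw [hCe] at hp hq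
    exact reach16_trans hp.2.2 hq.2.1
  set T : ℕ → Set X := fun n =>
    closure {z | a ≤ Metric.infDist z C ∧ ∃ k ≥ 1, ∃ c : ℕ → X,
      c 0 = x0 ∧ c k = z ∧ IsDeltaChain ⇑f (1 / (n + 1)) k c} with hT
  have hTne : ∀ n, (T n).Nonempty := by
    intro n
    have hε : (0:ℝ) < 1 / (n + 1) := by positivity
    obtain ⟨δ', hδ', huc⟩ := uc16 f.continuous (ε := 1 / (n + 1) / 2) (by positivity)
    obtain ⟨x, y, hxb, hxy, hya⟩ := hcon (min (δ' / 2) (1 / (n + 1) / 2)) (by positivity)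
    have hxlt : Metric.infDist x C < δ' :=
      lt_of_le_of_lt (hxb.trans (min_le_left _ _)) (by linarith)
    obtain ⟨p, hpC, hpx⟩ := (Metric.infDist_lt_iff ⟨x0, hx0C⟩).mp hxlt
    obtain ⟨k1, hk1, c1, h10, h1k, h1⟩ := hmut x0 hx0C p hpC (1 / (n + 1) / 2) (by positivity)
    obtain ⟨k2, hk2, c2, h20, h2k, h2⟩ := hxy (1 / (n + 1) / 2) (by positivity)
    refine ⟨y, subset_closure ⟨hya.le, k1 + k2, by omega, glue16 k1 c1 c2,
      by rw [glue16_zero]; exact h10, by rw [glue16_last _ _ _ hk2]; exact h2k,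
      glue16_chain h1 h2 hk2 ?_ (by linarith)⟩⟩
    have hfp : dist (f p) (f x) ≤ 1 / (n + 1) / 2 := huc _ _ (by rw [dist_comm]; exact hpx.le)
    have h21 : dist (f x) (c2 1) ≤ 1 / (n + 1) / 2 := by
      have := h2 0 hk2
      rwa [h20] at this
    rw [h1k]
    calc dist (f p) (c2 1) ≤ dist (f p) (f x) + dist (f x) (c2 1) := dist_triangle _ _ _
      _ ≤ 1 / (n + 1) := by linarith
  have hTmono : ∀ m n : ℕ, m ≤ n → T n ⊆ T m := by
    intro m n hmn
    apply closure_mono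
    rintro z ⟨hz, k, hk, c, h0, hkz, hc⟩
    refine ⟨hz, k, hk, c, h0, hkz, fun i hi => (hc i hi).trans ?_⟩
    apply one_div_le_one_div_of_le (by positivity)
    have : (m : ℝ) ≤ (n : ℝ) := Nat.cast_le.mpr hmn
    linarith
  obtain ⟨z, hz⟩ := IsCompact.nonempty_iInter_of_directed_nonempty_isCompact_isClosed T
    (fun m n => ⟨max m n, hTmono m _ (le_max_left _ _), hTmono n _ (le_max_right _ _)⟩)
    hTne (fun n => isClosed_closure.isCompact) (fun n => isClosed_closure)
  simp only [Set.mem_iInter] at hz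
  have hza : a ≤ Metric.infDist z C := by
    have hsub : T 0 ⊆ {w | a ≤ Metric.infDist w C} :=
      closure_minimal (fun w hw => hw.1)
        (isClosed_le continuous_const (Metric.continuous_infDist_pt C))
    exact hsub (hz 0)
  have hreach : ChainReach ⇑f x0 z := by
    apply reach16_of_approx f.continuous
    intro δ hδ
    obtain ⟨n, hn⟩ := exists_nat_one_div_lt hδ
    obtain ⟨z', hz', hdz⟩ := Metric.mem_closure_iff.mp (hz n) δ hδ
    obtain ⟨-, k, hk, c, h0, hkz, hc⟩ := hz'
    exact ⟨x0, z', by simp [hδ.le], hdz.le, k, hk, c, h0, hkz,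
      fun i hi => (hc i hi).trans hn.le⟩
  have hzC := hter x0 hx0C z hreach
  rw [Metric.infDist_zero_of_mem hzC] at hza
  linarith

private lemma exists16_terminal (f : X ≃ₜ X) (x : X) :
    ∃ S : Set X, IsChainComponent ⇑f S ∧ ChainStable ⇑f S ∧
      (∀ y ∈ S, ChainReach ⇑f x y) ∧ S.Nonempty := by
  set A : Set (Set X) := {S | S.Nonempty ∧ IsClosed S ∧ ChainStable ⇑f S ∧
    ∀ y ∈ S, ChainReach ⇑f x y} with hA
  have hFx : {y | ChainReach ⇑f x y} ∈ A :=
    ⟨⟨f x, reach16_self_apply x⟩, closed16_reach_right f.continuous x,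
      fun u hu v huv => reach16_trans hu huv, fun y hy => hy⟩
  have hH : ∀ c ⊆ A, IsChain (· ⊆ ·) c → c.Nonempty → ∃ lb ∈ A, ∀ s ∈ c, lb ⊆ s := by
    intro c hcA hchain hcne
    have hne : Nonempty c := hcne.to_subtype
    refine ⟨⋂₀ c, ⟨?_, isClosed_sInter fun s hs => (hcA hs).2.1, ?_, ?_⟩,
      fun s hs => Set.sInter_subset_of_mem hs⟩
    · rw [Set.sInter_eq_iInter]
      apply IsCompact.nonempty_iInter_of_directed_nonempty_isCompact_isClosed
      · rintro ⟨s, hs⟩ ⟨t, ht⟩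
        rcases hchain.total hs ht with h | h
        · exact ⟨⟨s, hs⟩, Set.Subset.rfl, h⟩
        · exact ⟨⟨t, ht⟩, h, Set.Subset.rfl⟩
      · exact fun s => (hcA s.2).1
      · exact fun s => ((hcA s.2).2.1).isCompact
      · exact fun s => (hcA s.2).2.1
    · intro u hu v huv
      rw [Set.mem_sInter] at hu ⊢
      exact fun s hs => (hcA hs).2.2.1 u (hu s hs) v huv
    · intro y hy
      obtain ⟨s, hs⟩ := hcne
      exact (hcA hs).2.2.2 y (Set.mem_sInter.mp hy s hs)
  obtain ⟨m, hmFx, hmin⟩ := zorn_superset_nonempty A hH _ hFx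
  obtain ⟨hmne, hmcl, hmst, hmre⟩ := hmin.prop
  have hFy : ∀ y ∈ m, ∀ z ∈ m, ChainReach ⇑f y z := by
    intro y hy
    have h1 : {z | ChainReach ⇑f y z} ∈ A :=
      ⟨⟨f y, reach16_self_apply y⟩, closed16_reach_right f.continuous y,
        fun u hu v huv => reach16_trans hu huv,
        fun z hz => reach16_trans (hmre y hy) hz⟩
    have h2 : {z | ChainReach ⇑f y z} ⊆ m := fun z hz => hmst y hy z hz
    have h3 := hmin.2 h1 h2
    exact fun z hz => h3 hz
  obtain ⟨y0, hy0⟩ := hmne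
  refine ⟨m, ⟨y0, hFy y0 hy0 y0 hy0, ?_⟩, hmst, hmre, ⟨y0, hy0⟩⟩
  ext y
  constructor
  · intro hy
    exact ⟨hFy y hy y hy, hFy y0 hy0 y hy, hFy y hy y0 hy0⟩
  · rintro ⟨-, h2, -⟩
    exact hmst y0 hy0 y h2

private lemma main16_half (f : X ≃ₜ X) {C : Set X} (hC : IsChainComponent ⇑f C)
    (hter : ChainStable ⇑f C) (hini : InitialStable ⇑f C) (hno : ¬ IsOpen C)
    {a : ℝ} (ha : 0 < a) :
    ∃ D : Set X, IsChainComponent ⇑f D ∧ ChainStable ⇑f D ∧ D ≠ C ∧ D ⊆ Nbhd a C := by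
  obtain ⟨b, hb, hclaim⟩ := claimA16 f hC hter ha
  have hx : ∃ x, x ∉ C ∧ Metric.infDist x C ≤ b := by
    by_contra h
    push_neg at h
    apply hno
    rw [Metric.isOpen_iff]
    intro p hp
    refine ⟨b, hb, fun q hq => ?_⟩
    by_contra hqC
    have h1 := h q hqC
    have h2 : Metric.infDist q C ≤ dist q p := Metric.infDist_le_dist_of_mem hp
    rw [Metric.mem_ball] at hq
    linarith
  obtain ⟨x, hxC, hxb⟩ := hx
  obtain ⟨S, hS1, hS2, hS3, hS4⟩ := exists16_terminal f x
  refine ⟨S, hS1, hS2, ?_, fun y hy => hclaim x y hxb (hS3 y hy)⟩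
  rintro rfl
  obtain ⟨y0, hy0⟩ := hS4
  exact hxC (hini y0 hy0 x (hS3 y0 hy0))

end Stmt16Aux

theorem stmt16 [MetricSpace X] [CompactSpace X] (f : X ≃ₜ X)
    (C : Set X) (hC : IsChainComponent (⇑f) C)
    (hter : ChainStable (⇑f) C) (hini : InitialStable (⇑f) C)
    (hnc : ¬ IsClopen C) :
    ∀ a > 0, ∃ D E : Set X,
      IsChainComponent (⇑f) D ∧ ChainStable (⇑f) D ∧ D ≠ C ∧
      IsChainComponent (⇑f) E ∧ InitialStable (⇑f) E ∧ E ≠ C ∧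
      D ∪ E ⊆ Nbhd a C := by
  have hCcl : IsClosed C := by
    obtain ⟨x0, hx00, hCe⟩ := hC
    rw [hCe]
    exact IsClosed.inter (closed16_reach_diag f.continuous)
      (IsClosed.inter (closed16_reach_right f.continuous x0)
        (closed16_reach_left f.continuous x0))
  have hno : ¬ IsOpen C := fun ho => hnc ⟨hCcl, ho⟩
  intro a ha
  obtain ⟨D, hD1, hD2, hD3, hD4⟩ := main16_half f hC hter hini hno ha
  have hC' : IsChainComponent ⇑f.symm C := comp16_symm' f hC
  have hter' : ChainStable ⇑f.symm C := fun p hp y hy => hini p hp y (reach16_symm f hy)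
  have hini' : InitialStable ⇑f.symm C := fun p hp y hy => hter p hp y (reach16_symm f hy)
  obtain ⟨E, hE1, hE2, hE3, hE4⟩ := main16_half f.symm hC' hter' hini' hno ha
  refine ⟨D, E, hD1, hD2, hD3, comp16_symm f hE1,
    fun p hp y hy => hE2 p hp y (reach16_symm' f hy), hE3, Set.union_subset hD4 hE4⟩
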